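/- Let I = [a,b] and let c, τ : I → ℝ be continuous with c(t) < 0 and τ(t) > 0 for all t ∈ I, such that η : I → ℝ, η(t) = t − τ(t), is strictly increasing on I. Let J = η(I) ∪ I and let y : J → ℝ be continuous, continuously differentiable on I, satisfy y′(t) = c(t)·y(η(t)) for all t ∈ I, and suppose that for every t ∈ I the restriction of y to [η(t), t] is not identically zero. Let k ≥ 3 be an integer and suppose there exist points α₁, …, α_k in [a,b] with η(α_j) = α_{j−1} for j = 2, …, k. Then for every t ∈ [α₃, b] with y(t) = 0 and y(η(t)) = 0, either V(y,[η(t), t]) = ∞ or V(y,[η(t), t]) < V(y,[η³(t), η²(t)]), where η², η³ denote the second and third iterates of η. -/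

import Mathlib

open Set

/-- The set of integers `k ≥ 1` such that `φ` has `k` sign changes witnessed by
points `s⁰ < s¹ < ⋯ < sᵏ` in `[a,b]` with `φ(sⁱ⁻¹)·φ(sⁱ) < 0`. -/
def scSet (φ : ℝ → ℝ) (a b : ℝ) : Set ℕ :=
  {k | 1 ≤ k ∧ ∃ s : ℕ → ℝ, (∀ i, i ≤ k → s i ∈ Set.Icc a b) ∧
    (∀ i, i < k → s i < s (i + 1)) ∧
    (∀ i, 1 ≤ i → i ≤ k → φ (s (i - 1)) * φ (s i) < 0)}

open Classical in
/-- The sign-change counting function `sc(φ,[a,b])` with values in `ℕ∞`. -/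
noncomputable def sc (φ : ℝ → ℝ) (a b : ℝ) : ℕ∞ :=
  if (∀ s ∈ Set.Icc a b, 0 ≤ φ s) ∨ (∀ s ∈ Set.Icc a b, φ s ≤ 0) then 0
  else sSup ((fun n : ℕ => (n : ℕ∞)) '' scSet φ a b)

open Classical in
/-- The discrete Lyapunov function `V(φ,[a,b])`: equals `sc(φ,[a,b])` if the latter
is odd or infinite, and `sc(φ,[a,b]) + 1` otherwise. -/
noncomputable def V (φ : ℝ → ℝ) (a b : ℝ) : ℕ∞ :=
  if ∃ n : ℕ, sc φ a b = (n : ℕ∞) ∧ Even n then sc φ a b + 1 else sc φ a b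

/-- Membership in the regularity class `H_{[a,b]}` for a `C¹` function `φ` with
derivative `φ'`: boundary nondegeneracy and all zeros simple. -/
def Hmem (φ φ' : ℝ → ℝ) (a b : ℝ) : Prop :=
  (φ b ≠ 0 ∨ φ a * φ' b < 0) ∧ (φ a ≠ 0 ∨ φ' a * φ b > 0) ∧
  ∀ s ∈ Set.Icc a b, φ s = 0 → φ' s ≠ 0

lemma mem_scSet {φ : ℝ → ℝ} {u v : ℝ} {n : ℕ} (hn : 1 ≤ n) (p : ℕ → ℝ)
    (h1 : ∀ i ≤ n, p i ∈ Icc u v) (h2 : ∀ i < n, p i < p (i+1))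
    (h3 : ∀ i < n, φ (p i) * φ (p (i+1)) < 0) : n ∈ scSet φ u v := by
  refine ⟨hn, p, h1, h2, ?_⟩
  intro i h1i hin
  obtain ⟨j, rfl⟩ : ∃ j, i = j + 1 := ⟨i - 1, by omega⟩
  simpa using h3 j (by omega)

lemma chain_of_mem {φ : ℝ → ℝ} {u v : ℝ} {n : ℕ} (h : n ∈ scSet φ u v) :
    ∃ p : ℕ → ℝ, (∀ i ≤ n, p i ∈ Icc u v) ∧ (∀ i < n, p i < p (i+1)) ∧
      (∀ i < n, φ (p i) * φ (p (i+1)) < 0) := by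
  obtain ⟨-, p, h1, h2, h3⟩ := h
  exact ⟨p, fun i hi => h1 i hi, fun i hi => h2 i hi,
    fun i hi => by simpa using h3 (i+1) (by omega) (by omega)⟩

lemma scSet_downward {φ : ℝ → ℝ} {u v : ℝ} {m n : ℕ} (h : m ∈ scSet φ u v)
    (h1 : 1 ≤ n) (h2 : n ≤ m) : n ∈ scSet φ u v := by
  obtain ⟨-, p, hm, ho, ha⟩ := h
  exact ⟨h1, p, fun i hi => hm i (le_trans hi h2), fun i hi => ho i (by omega),
    fun i hi1 hi2 => ha i hi1 (by omega)⟩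

lemma le_sc {φ : ℝ → ℝ} {u v : ℝ} {n : ℕ} (h : n ∈ scSet φ u v) :
    (n : ℕ∞) ≤ sc φ u v := by
  obtain ⟨hn, p, hm, -, ha⟩ := h.out
  have hprod := ha 1 le_rfl hn
  simp only [Nat.sub_self] at hprod
  rw [sc, if_neg]
  · exact le_sSup ⟨n, h, rfl⟩
  · rintro (hall | hall)
    · nlinarith [hall (p 0) (hm 0 (by omega)), hall (p 1) (hm 1 hn)]
    · nlinarith [hall (p 0) (hm 0 (by omega)), hall (p 1) (hm 1 hn)]

lemma sc_attained {φ : ℝ → ℝ} {u v : ℝ} {n : ℕ} (h : sc φ u v = (n : ℕ∞))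
    (hn : 1 ≤ n) : n ∈ scSet φ u v := by
  by_contra hmem
  have hub : ∀ m ∈ scSet φ u v, m ≤ n - 1 := by
    intro m hm
    by_contra hgt
    push_neg at hgt
    exact hmem (scSet_downward hm hn (by omega))
  have hle : sc φ u v ≤ ((n-1 : ℕ) : ℕ∞) := by
    rw [sc]
    split
    · exact zero_le
    · apply sSup_le
      rintro x ⟨m, hm, rfl⟩
      show ((m:ℕ∞)) ≤ ((n-1:ℕ):ℕ∞)
      exact_mod_cast hub m hm
  rw [h] at hle
  have : n ≤ n - 1 := by exact_mod_cast hle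
  omega

lemma sc_le_V (φ : ℝ → ℝ) (u v : ℝ) : sc φ u v ≤ V φ u v := by
  rw [V]; split
  · exact le_self_add
  · exact le_rfl

lemma V_eq_top {φ : ℝ → ℝ} {u v : ℝ} (h : sc φ u v = ⊤) : V φ u v = ⊤ := by
  rw [V, if_neg, h]
  rintro ⟨m, hm, -⟩
  rw [h] at hm
  exact (ENat.top_ne_coe m) hm

lemma V_of_even {φ : ℝ → ℝ} {u v : ℝ} {n : ℕ} (h : sc φ u v = (n : ℕ∞)) (he : Even n) :
    V φ u v = (n : ℕ∞) + 1 := by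
  rw [V, if_pos ⟨n, h, he⟩, h]

lemma V_of_odd {φ : ℝ → ℝ} {u v : ℝ} {n : ℕ} (h : sc φ u v = (n : ℕ∞)) (ho : ¬ Even n) :
    V φ u v = (n : ℕ∞) := by
  rw [V, if_neg, h]
  rintro ⟨m, hm, hme⟩
  rw [h] at hm
  have : n = m := by exact_mod_cast hm
  exact ho (this ▸ hme)

lemma hlp1 {A B C D : ℝ} (h1 : 0 < A*B) (h2 : 0 < C*D) (h3 : B*D < 0) : A*C < 0 := by nlinarith
lemma hlp2 {A B C : ℝ} (h1 : 0 < A*B) (h2 : C*B < 0) : A*C < 0 := by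
  nlinarith [mul_neg_of_pos_of_neg h1 h2, sq_nonneg B]
lemma hlp3 {A B C : ℝ} (h1 : A*B < 0) (h2 : B*C < 0) : 0 < A*C := by
  nlinarith [mul_pos_of_neg_of_neg h1 h2, sq_nonneg B]
lemma hlp4 {A B C D : ℝ} (h1 : A*B < 0) (h2 : C*D < 0) (h3 : B*D < 0) : A*C < 0 := by nlinarith

lemma mvt_aux (y y' : ℝ → ℝ) (a b : ℝ)
    (hcont : ContinuousOn y (Icc a b))
    (hderiv : ∀ x ∈ Ioo a b, HasDerivAt y (y' x) x)
    (x z : ℝ) (hx : a ≤ x) (hz : z ≤ b) (hxz : x < z) :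
    ∃ ξ ∈ Ioo x z, y' ξ = (y z - y x) / (z - x) :=
  exists_hasDerivAt_eq_slope y y' hxz
    (hcont.mono (Icc_subset_Icc hx hz))
    (fun w hw => hderiv w ⟨lt_of_le_of_lt hx hw.1, lt_of_lt_of_le hw.2 hz⟩)

lemma deriv_chain (y y' : ℝ → ℝ) (a b : ℝ)
    (hcont : ContinuousOn y (Icc a b))
    (hderiv : ∀ x ∈ Ioo a b, HasDerivAt y (y' x) x)
    (u v : ℝ) (hu : a ≤ u) (hv : v ≤ b)
    (n : ℕ) (p : ℕ → ℝ)
    (hmem : ∀ i ≤ n, p i ∈ Icc u v)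
    (hmono : ∀ i < n, p i < p (i + 1))
    (halt : ∀ i < n, y (p i) * y (p (i + 1)) < 0)
    (hv0 : y v = 0) (hp0 : y (p 0) ≠ 0) :
    ∃ q : ℕ → ℝ,
      (∀ i ≤ n, q i ∈ Ioo u v) ∧ (∀ i ≤ n, p i < q i) ∧
      (∀ i < n, q i < q (i + 1)) ∧
      (∀ i < n, y' (q i) * y' (q (i + 1)) < 0) ∧
      (∀ i < n, 0 < y' (q i) * y (p (i + 1))) ∧
      y' (q n) * y (p n) < 0 := by
  have hmvt : ∀ x z : ℝ, u ≤ x → z ≤ v → x < z →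
      ∃ ξ ∈ Ioo x z, y' ξ = (y z - y x) / (z - x) :=
    fun x z hx hz hxz => mvt_aux y y' a b hcont hderiv x z (le_trans hu hx) (le_trans hz hv) hxz
  have H1 : ∀ i, i < n → ∃ ξ, ξ ∈ Ioo (p i) (p (i+1)) ∧ 0 < y' ξ * y (p (i+1)) := by
    intro i hi
    obtain ⟨ξ, hmemξ, hs⟩ := hmvt (p i) (p (i+1)) (hmem i hi.le).1 (hmem (i+1) hi).2 (hmono i hi)
    refine ⟨ξ, hmemξ, ?_⟩
    have hd : 0 < p (i+1) - p i := by linarith [hmono i hi]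
    have hik := halt i hi
    rw [hs, div_mul_eq_mul_div]
    apply div_pos _ hd
    nlinarith [sq_nonneg (y (p (i+1)))]
  choose ζ hζ using H1
  have hpn : y (p n) ≠ 0 := by
    rcases Nat.eq_zero_or_pos n with h0 | h0
    · rw [h0]; exact hp0
    · obtain ⟨m, rfl⟩ : ∃ m, n = m + 1 := ⟨n-1, by omega⟩
      intro h
      have := halt m (by omega)
      rw [h] at this
      nlinarith
  have hpnv : p n < v := lt_of_le_of_ne (hmem n le_rfl).2 (fun h => hpn (h ▸ hv0))
  obtain ⟨ξ, hmemξ, hsξ⟩ := hmvt (p n) v (hmem n le_rfl).1 le_rfl hpnv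
  have hlast : y' ξ * y (p n) < 0 := by
    have hd : 0 < v - p n := by linarith
    rw [hsξ, hv0, div_mul_eq_mul_div]
    apply div_neg_of_neg_of_pos _ hd
    rcases hpn.lt_or_gt with h|h <;> nlinarith
  refine ⟨fun i => if h : i < n then ζ i h else ξ, ?_, ?_, ?_, ?_, ?_, ?_⟩
  · intro i hi
    by_cases h : i < n
    · simp only [dif_pos h]
      exact ⟨lt_of_le_of_lt (hmem i hi).1 (hζ i h).1.1,
        lt_of_lt_of_le (hζ i h).1.2 (hmem (i+1) h).2⟩
    · simp only [dif_neg h]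
      exact ⟨lt_of_le_of_lt (hmem n le_rfl).1 hmemξ.1, hmemξ.2⟩
  · intro i hi
    by_cases h : i < n
    · simp only [dif_pos h]; exact (hζ i h).1.1
    · have : i = n := by omega
      subst this
      simp only [dif_neg h]; exact hmemξ.1
  · intro i hi
    by_cases h2 : i + 1 < n
    · simp only [dif_pos hi, dif_pos h2]
      exact lt_trans (hζ i hi).1.2 (hζ (i+1) h2).1.1
    · have he : i + 1 = n := by omega
      simp only [dif_pos hi, dif_neg h2]
      calc ζ i hi < p (i+1) := (hζ i hi).1.2
        _ < ξ := by rw [he]; exact hmemξ.1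
  · intro i hi
    by_cases h2 : i + 1 < n
    · simp only [dif_pos hi, dif_pos h2]
      exact hlp1 (hζ i hi).2 (hζ (i+1) h2).2 (halt (i+1) h2)
    · have he : i + 1 = n := by omega
      simp only [dif_pos hi, dif_neg h2]
      have h2' : y' ξ * y (p (i+1)) < 0 := by rw [he]; exact hlast
      exact hlp2 (hζ i hi).2 h2'
  · intro i hi
    simp only [dif_pos hi]
    exact (hζ i hi).2
  · simp only [dif_neg (lt_irrefl n)]
    exact hlast

lemma eta_chain (y y' c η : ℝ → ℝ) (a b : ℝ)
    (hη_mono : StrictMonoOn η (Icc a b))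
    (hode : ∀ s ∈ Icc a b, y' s = c s * y (η s))
    (hc_neg : ∀ s ∈ Icc a b, c s < 0)
    (u v : ℝ) (huI : u ∈ Icc a b) (hvI : v ∈ Icc a b)
    (n : ℕ) (q : ℕ → ℝ)
    (hmem : ∀ i ≤ n, q i ∈ Ioo u v)
    (hmono : ∀ i < n, q i < q (i+1))
    (halt : ∀ i < n, y' (q i) * y' (q (i+1)) < 0)
    (hne : ∀ i ≤ n, y' (q i) ≠ 0) :
    (∀ i ≤ n, η (q i) ∈ Ioo (η u) (η v)) ∧ (∀ i < n, η (q i) < η (q (i+1))) ∧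
    (∀ i < n, y (η (q i)) * y (η (q (i+1))) < 0) ∧ (∀ i ≤ n, y (η (q i)) * y' (q i) < 0) := by
  have hqI : ∀ i ≤ n, q i ∈ Icc a b := fun i hi =>
    ⟨le_trans huI.1 (hmem i hi).1.le, le_trans (hmem i hi).2.le hvI.2⟩
  have hlink : ∀ i ≤ n, y (η (q i)) * y' (q i) < 0 := by
    intro i hi
    have h1 := hode _ (hqI i hi)
    have h2 := hc_neg _ (hqI i hi)
    have h3 : y (η (q i)) ≠ 0 := fun h => hne i hi (by rw [h1, h, mul_zero])
    rw [h1]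
    rcases h3.lt_or_gt with h|h
    · nlinarith [mul_pos_of_neg_of_neg h h]
    · nlinarith [mul_pos h h]
  refine ⟨fun i hi => ⟨hη_mono huI (hqI i hi) (hmem i hi).1, hη_mono (hqI i hi) hvI (hmem i hi).2⟩,
    fun i hi => hη_mono (hqI i hi.le) (hqI (i+1) hi) (hmono i hi), fun i hi => ?_, hlink⟩
  exact hlp4 (hlink i hi.le) (hlink (i+1) hi) (halt i hi)

lemma step_right (y y' c η : ℝ → ℝ) (a b : ℝ)
    (hcont : ContinuousOn y (Icc a b))
    (hderiv : ∀ x ∈ Ioo a b, HasDerivAt y (y' x) x)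
    (hη_mono : StrictMonoOn η (Icc a b))
    (hode : ∀ s ∈ Icc a b, y' s = c s * y (η s))
    (hc_neg : ∀ s ∈ Icc a b, c s < 0)
    (u v : ℝ) (huI : u ∈ Icc a b) (hvI : v ∈ Icc a b)
    (n : ℕ) (p : ℕ → ℝ)
    (hmem : ∀ i ≤ n, p i ∈ Icc u v)
    (hmono : ∀ i < n, p i < p (i + 1))
    (halt : ∀ i < n, y (p i) * y (p (i + 1)) < 0)
    (hv0 : y v = 0) (hp0 : y (p 0) ≠ 0) :
    ∃ q : ℕ → ℝ, (∀ i ≤ n, q i ∈ Ioo (η u) (η v)) ∧ (∀ i < n, q i < q (i+1)) ∧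
      (∀ i < n, y (q i) * y (q (i+1)) < 0) ∧ 0 < y (q n) * y (p n) := by
  obtain ⟨w, hw1, -, hw3, hw4, -, hwlast⟩ :=
    deriv_chain y y' a b hcont hderiv u v huI.1 hvI.2 n p hmem hmono halt hv0 hp0
  have hne : ∀ i ≤ n, y' (w i) ≠ 0 := by
    intro i hi
    rcases eq_or_lt_of_le hi with rfl | hlt
    · intro h; rw [h] at hwlast; simp at hwlast
    · intro h; have := hw4 i hlt; rw [h] at this; simp at this
  obtain ⟨h1, h2, h3, h4⟩ :=
    eta_chain y y' c η a b hη_mono hode hc_neg u v huI hvI n w hw1 hw3 hw4 hne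
  refine ⟨fun i => η (w i), h1, h2, h3, ?_⟩
  exact hlp3 (h4 n le_rfl) hwlast

lemma step_both (y y' c η : ℝ → ℝ) (a b : ℝ)
    (hcont : ContinuousOn y (Icc a b))
    (hderiv : ∀ x ∈ Ioo a b, HasDerivAt y (y' x) x)
    (hη_mono : StrictMonoOn η (Icc a b))
    (hode : ∀ s ∈ Icc a b, y' s = c s * y (η s))
    (hc_neg : ∀ s ∈ Icc a b, c s < 0)
    (u v : ℝ) (huI : u ∈ Icc a b) (hvI : v ∈ Icc a b)
    (n : ℕ) (p : ℕ → ℝ)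
    (hmem : ∀ i ≤ n, p i ∈ Icc u v)
    (hmono : ∀ i < n, p i < p (i + 1))
    (halt : ∀ i < n, y (p i) * y (p (i + 1)) < 0)
    (hu0 : y u = 0) (hv0 : y v = 0) (hp0 : y (p 0) ≠ 0) :
    ∃ q : ℕ → ℝ, (∀ i ≤ n+1, q i ∈ Ioo (η u) (η v)) ∧ (∀ i < n+1, q i < q (i+1)) ∧
      (∀ i < n+1, y (q i) * y (q (i+1)) < 0) := by
  obtain ⟨w, hw1, hwp, hw3, hw4, hw5, hwlast⟩ :=
    deriv_chain y y' a b hcont hderiv u v huI.1 hvI.2 n p hmem hmono halt hv0 hp0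
  have hup0 : u < p 0 := lt_of_le_of_ne (hmem 0 (by omega)).1 (fun h => hp0 (h ▸ hu0))
  obtain ⟨r, hr, hrs⟩ := mvt_aux y y' a b hcont hderiv u (p 0) huI.1
    (le_trans (hmem 0 (by omega)).2 hvI.2) hup0
  have hrsign : 0 < y' r * y (p 0) := by
    have hd : 0 < p 0 - u := by linarith
    rw [hrs, hu0, sub_zero, div_mul_eq_mul_div]
    apply div_pos _ hd
    rcases hp0.lt_or_gt with h|h
    · nlinarith [mul_pos_of_neg_of_neg h h]
    · nlinarith [mul_pos h h]
  set w' : ℕ → ℝ := fun i => if i = 0 then r else w (i-1) with hw'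
  have hmem' : ∀ i ≤ n+1, w' i ∈ Ioo u v := by
    intro i hi
    rcases Nat.eq_zero_or_pos i with rfl | hpos
    · simp only [hw', if_pos rfl]
      exact ⟨hr.1, lt_of_lt_of_le (lt_trans hr.2 (hwp 0 (by omega))) (hw1 0 (by omega)).2.le⟩
    · obtain ⟨j, rfl⟩ : ∃ j, i = j + 1 := ⟨i-1, by omega⟩
      simpa [hw'] using hw1 j (by omega)
  have hmono' : ∀ i < n+1, w' i < w' (i+1) := by
    intro i hi
    rcases Nat.eq_zero_or_pos i with rfl | hpos
    · simp only [hw', if_pos rfl, if_neg (Nat.one_ne_zero)]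
      exact lt_trans hr.2 (hwp 0 (by omega))
    · obtain ⟨j, rfl⟩ : ∃ j, i = j + 1 := ⟨i-1, by omega⟩
      simpa [hw'] using hw3 j (by omega)
  have halt' : ∀ i < n+1, y' (w' i) * y' (w' (i+1)) < 0 := by
    intro i hi
    rcases Nat.eq_zero_or_pos i with rfl | hpos
    · simp only [hw', if_pos rfl, if_neg (Nat.one_ne_zero)]
      show y' r * y' (w 0) < 0
      rcases Nat.eq_zero_or_pos n with rfl | hn
      · exact hlp2 hrsign hwlast
      · exact hlp1 hrsign (hw5 0 hn) (halt 0 hn)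
    · obtain ⟨j, rfl⟩ : ∃ j, i = j + 1 := ⟨i-1, by omega⟩
      simpa [hw'] using hw4 j (by omega)
  have hne' : ∀ i ≤ n+1, y' (w' i) ≠ 0 := by
    intro i hi
    rcases Nat.eq_zero_or_pos i with rfl | hpos
    · simp only [hw', if_pos rfl]
      intro h; rw [h] at hrsign; simp at hrsign
    · obtain ⟨j, rfl⟩ : ∃ j, i = j + 1 := ⟨i-1, by omega⟩
      simp only [hw', if_neg (Nat.succ_ne_zero j), Nat.add_sub_cancel]
      rcases eq_or_lt_of_le (by omega : j ≤ n) with rfl | hlt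
      · intro h; rw [h] at hwlast; simp at hwlast
      · intro h; have := hw4 j hlt; rw [h] at this; simp at this
  obtain ⟨h1, h2, h3, -⟩ :=
    eta_chain y y' c η a b hη_mono hode hc_neg u v huI hvI (n+1) w' hmem' hmono' halt' hne'
  exact ⟨fun i => η (w' i), h1, h2, h3⟩

lemma alt_ends (y : ℝ → ℝ) (p : ℕ → ℝ) :
    ∀ n, (∀ i < n, y (p i) * y (p (i+1)) < 0) → y (p 0) ≠ 0 →
      (Even n → 0 < y (p 0) * y (p n)) ∧ (¬ Even n → y (p 0) * y (p n) < 0) := by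
  intro n
  induction n with
  | zero =>
      intro _ hp0
      refine ⟨fun _ => ?_, fun h => absurd Even.zero h⟩
      rcases hp0.lt_or_gt with h|h
      · nlinarith
      · nlinarith
  | succ n ih =>
      intro halt hp0
      have IH := ih (fun i hi => halt i (by omega)) hp0
      have hn := halt n (by omega)
      constructor
      · intro he
        have hno : ¬ Even n := by rwa [Nat.even_add_one] at he
        exact hlp3 (IH.2 hno) hn
      · intro ho
        have hye : Even n := by rw [Nat.even_add_one, not_not] at ho; exact ho
        exact hlp2 (IH.1 hye) (by rw [mul_comm]; exact hn)

/-- Strict drop of `V` at double zeros: if `y(t) = y(η(t)) = 0` for some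
`t ∈ [α₃, b]`, then `V(y,[η(t),t]) = ∞` or `V(y,[η(t),t]) < V(y,[η³(t),η²(t)])`. -/
theorem V_strict_drop_at_double_zero
    (a b : ℝ) (hab : a ≤ b)
    (c τ : ℝ → ℝ)
    (hc_cont : ContinuousOn c (Set.Icc a b)) (hτ_cont : ContinuousOn τ (Set.Icc a b))
    (hc_neg : ∀ t ∈ Set.Icc a b, c t < 0) (hτ_pos : ∀ t ∈ Set.Icc a b, 0 < τ t)
    (η : ℝ → ℝ) (hη_def : ∀ t, η t = t - τ t)
    (hη_mono : StrictMonoOn η (Set.Icc a b))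
    (y y' : ℝ → ℝ)
    (hy_cont : ContinuousOn y (η '' Set.Icc a b ∪ Set.Icc a b))
    (hy_deriv : ∀ t ∈ Set.Icc a b, HasDerivWithinAt y (y' t) (Set.Icc a b) t)
    (hy'_cont : ContinuousOn y' (Set.Icc a b))
    (hy_ode : ∀ t ∈ Set.Icc a b, y' t = c t * y (η t))
    (hy_ne : ∀ t ∈ Set.Icc a b, ∃ s ∈ Set.Icc (η t) t, y s ≠ 0)
    (k : ℕ) (hk : 3 ≤ k)
    (α : ℕ → ℝ)
    (hα_mem : ∀ j, 1 ≤ j → j ≤ k → α j ∈ Set.Icc a b)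
    (hα_chain : ∀ j, 2 ≤ j → j ≤ k → η (α j) = α (j - 1)) :
    ∀ t ∈ Set.Icc (α 3) b, y t = 0 → y (η t) = 0 →
      V y (η t) t = ⊤ ∨ V y (η t) t < V y (η^[3] t) (η^[2] t) := by
  intro t ht hyt hyηt
  have hα3 := hα_mem 3 (by omega) hk
  have hα2 := hα_mem 2 (by omega) (by omega)
  have hα1 := hα_mem 1 (by omega) (by omega)
  have hc3 : η (α 3) = α 2 := by simpa using hα_chain 3 (by omega) hk
  have hc2 : η (α 2) = α 1 := by simpa using hα_chain 2 (by omega) (by omega)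
  have htI : t ∈ Icc a b := ⟨le_trans hα3.1 ht.1, ht.2⟩
  have hmonoOn := hη_mono.monotoneOn
  have h23 : α 2 ≤ η t := hc3 ▸ hmonoOn hα3 htI ht.1
  have ht1I : η t ∈ Icc a b :=
    ⟨le_trans hα2.1 h23, by rw [hη_def t]; linarith [hτ_pos t htI, htI.2]⟩
  have h12 : α 1 ≤ η (η t) := hc2 ▸ hmonoOn hα2 ht1I h23
  have ht2I : η (η t) ∈ Icc a b :=
    ⟨le_trans hα1.1 h12, by rw [hη_def (η t)]; linarith [hτ_pos (η t) ht1I, ht1I.2]⟩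
  have hit2 : η^[2] t = η (η t) := by rw [Function.iterate_succ_apply', Function.iterate_one]
  have hit3 : η^[3] t = η (η (η t)) := by rw [Function.iterate_succ_apply', hit2]
  have hcont : ContinuousOn y (Icc a b) := hy_cont.mono subset_union_right
  have hderivAt : ∀ x ∈ Ioo a b, HasDerivAt y (y' x) x := fun x hx =>
    (hy_deriv x (Ioo_subset_Icc_self hx)).hasDerivAt (Icc_mem_nhds hx.1 hx.2)
  rcases eq_or_ne (sc y (η t) t) ⊤ with htop | hfin
  · exact Or.inl (V_eq_top htop)
  right
  rw [hit2, hit3]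
  obtain ⟨K, hK⟩ : ∃ K : ℕ, sc y (η t) t = (K : ℕ∞) := ⟨_, (ENat.coe_toNat hfin).symm⟩
  have hchain : ∃ p : ℕ → ℝ, (∀ i ≤ K, p i ∈ Icc (η t) t) ∧ (∀ i < K, p i < p (i+1)) ∧
      (∀ i < K, y (p i) * y (p (i+1)) < 0) ∧ y (p 0) ≠ 0 := by
    rcases Nat.eq_zero_or_pos K with rfl | hpos
    · obtain ⟨s, hs, hsne⟩ := hy_ne t htI
      exact ⟨fun _ => s, fun i _ => hs, fun i hi => absurd hi (by omega),
        fun i hi => absurd hi (by omega), hsne⟩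
    · obtain ⟨p, h1, h2, h3⟩ := chain_of_mem (sc_attained hK hpos)
      refine ⟨p, h1, h2, h3, fun h => ?_⟩
      have := h3 0 hpos; rw [h] at this; simp at this
  obtain ⟨p, hp1, hp2, hp3, hp0⟩ := hchain
  obtain ⟨q, hq1, hq2, hq3⟩ := step_both y y' c η a b hcont hderivAt hη_mono hy_ode hc_neg
    (η t) t ht1I htI K p hp1 hp2 hp3 hyηt hyt hp0
  have hq1' : ∀ i ≤ K+1, q i ∈ Icc (η (η t)) (η t) := fun i hi => Ioo_subset_Icc_self (hq1 i hi)
  have hq0ne : y (q 0) ≠ 0 := fun h => by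
    have := hq3 0 (by omega); rw [h] at this; simp at this
  rcases Nat.even_or_odd K with hev | hod
  · -- K even
    rw [V_of_even hK hev]
    have hgoal : (K+2) ∈ scSet y (η (η (η t))) (η (η t)) := by
      by_cases hmid : (K+2) ∈ scSet y (η (η t)) (η t)
      · obtain ⟨σ, hσ1, hσ2, hσ3⟩ := chain_of_mem hmid
        have hσ0 : y (σ 0) ≠ 0 := fun h => by
          have := hσ3 0 (by omega); rw [h] at this; simp at this
        obtain ⟨τ, hτ1, hτ2, hτ3, -⟩ := step_right y y' c η a b hcont hderivAt hη_mono hy_ode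
          hc_neg (η (η t)) (η t) ht2I ht1I (K+2) σ hσ1 hσ2 hσ3 hyηt hσ0
        exact mem_scSet (by omega) _ (fun i hi => Ioo_subset_Icc_self (hτ1 i hi)) hτ2 hτ3
      · have hqlast : y (q (K+1)) ≠ 0 := fun h => by
          have := hq3 K (by omega); rw [h] at this; simp at this
        by_cases h20 : y (η (η t)) = 0
        · obtain ⟨w, hw1, hw2, hw3⟩ := step_both y y' c η a b hcont hderivAt hη_mono hy_ode
            hc_neg (η (η t)) (η t) ht2I ht1I (K+1) q hq1' hq2 hq3 h20 hyηt hq0ne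
          exact mem_scSet (by omega) _ (fun i hi => Ioo_subset_Icc_self (hw1 i hi)) hw2 hw3
        · rcases (mul_ne_zero h20 hqlast).lt_or_gt with hPneg | hPpos
          · obtain ⟨τ, hτ1, hτ2, hτ3, hτlink⟩ := step_right y y' c η a b hcont hderivAt hη_mono
              hy_ode hc_neg (η (η t)) (η t) ht2I ht1I (K+1) q hq1' hq2 hq3 hyηt hq0ne
            refine mem_scSet (by omega) (fun i => if i ≤ K+1 then τ i else η (η t)) ?_ ?_ ?_
            · intro i hi
              by_cases h : i ≤ K+1
              · simp only [if_pos h]; exact Ioo_subset_Icc_self (hτ1 i h)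
              · simp only [if_neg h]
                exact ⟨le_of_lt (lt_trans (hτ1 0 (by omega)).1 (hτ1 0 (by omega)).2), le_rfl⟩
            · intro i hi
              by_cases h : i + 1 ≤ K+1
              · simp only [if_pos (by omega : i ≤ K+1), if_pos h]; exact hτ2 i (by omega)
              · have hieq : i = K+1 := by omega
                subst hieq
                simp only [if_pos le_rfl, if_neg h]
                exact (hτ1 (K+1) le_rfl).2
            · intro i hi
              by_cases h : i + 1 ≤ K+1
              · simp only [if_pos (by omega : i ≤ K+1), if_pos h]; exact hτ3 i (by omega)
              · have hieq : i = K+1 := by omega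
                subst hieq
                simp only [if_pos le_rfl, if_neg h]
                exact hlp2 hτlink hPneg
          · exfalso
            apply hmid
            have hends : y (q 0) * y (q (K+1)) < 0 :=
              (alt_ends y q (K+1) hq3 hq0ne).2 (by simp [Nat.even_add_one, hev])
            have hfirst : y (η (η t)) * y (q 0) < 0 := hlp2 hPpos hends
            refine mem_scSet (by omega) (fun i => if i = 0 then η (η t) else q (i-1)) ?_ ?_ ?_
            · intro i hi
              rcases Nat.eq_zero_or_pos i with rfl | hpos
              · simp only [if_pos rfl]
                exact ⟨le_rfl, le_of_lt (lt_trans (hq1 0 (by omega)).1 (hq1 0 (by omega)).2)⟩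
              · obtain ⟨j, rfl⟩ : ∃ j, i = j+1 := ⟨i-1, by omega⟩
                simp only [if_neg (Nat.succ_ne_zero j), Nat.add_sub_cancel]
                exact hq1' j (by omega)
            · intro i hi
              rcases Nat.eq_zero_or_pos i with rfl | hpos
              · simp only [if_pos rfl, if_neg Nat.one_ne_zero]
                norm_num
                exact (hq1 0 (by omega)).1
              · obtain ⟨j, rfl⟩ : ∃ j, i = j+1 := ⟨i-1, by omega⟩
                simp only [if_neg (Nat.succ_ne_zero j), Nat.add_sub_cancel,
                  if_neg (Nat.succ_ne_zero (j+1))]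
                exact hq2 j (by omega)
            · intro i hi
              rcases Nat.eq_zero_or_pos i with rfl | hpos
              · simp only [if_pos rfl, if_neg Nat.one_ne_zero]
                norm_num
                exact hfirst
              · obtain ⟨j, rfl⟩ : ∃ j, i = j+1 := ⟨i-1, by omega⟩
                simp only [if_neg (Nat.succ_ne_zero j), Nat.add_sub_cancel,
                  if_neg (Nat.succ_ne_zero (j+1))]
                exact hq3 j (by omega)
    calc (K:ℕ∞) + 1 < ((K+2 : ℕ) : ℕ∞) := by
          push_cast
          exact_mod_cast (by omega : K+1 < K+2)
      _ ≤ sc y (η (η (η t))) (η (η t)) := le_sc hgoal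
      _ ≤ V y (η (η (η t))) (η (η t)) := sc_le_V _ _ _
  · -- K odd
    rw [V_of_odd hK (Nat.not_even_iff_odd.mpr hod)]
    obtain ⟨τ, hτ1, hτ2, hτ3, -⟩ := step_right y y' c η a b hcont hderivAt hη_mono hy_ode
      hc_neg (η (η t)) (η t) ht2I ht1I (K+1) q hq1' hq2 hq3 hyηt hq0ne
    have hgoal : (K+1) ∈ scSet y (η (η (η t))) (η (η t)) :=
      mem_scSet (by omega) _ (fun i hi => Ioo_subset_Icc_self (hτ1 i hi)) hτ2 hτ3
    calc (K:ℕ∞) < ((K+1:ℕ):ℕ∞) := by exact_mod_cast (by omega : K < K+1)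
      _ ≤ sc y (η (η (η t))) (η (η t)) := le_sc hgoal
      _ ≤ V y (η (η (η t))) (η (η t)) := sc_le_V _ _ _
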